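/- For the Dyck vectors v(λ,a,ε) = 0 0 1 2^{a-ε} B_λ⁺ 1^ε of length L = a + 3 + λ_1 + ℓ(λ): area(v(λ,a,ε)) = 2L - λ_1 - 5 - ε and dinv(v(λ,a,ε)) = C(L,2) - 3L - |λ| + λ_1 + 7 + ε. In particular dinv(v(λ,a,1)) = dinv(v(λ,a,0)) + 1, so the two vectors have dinv of opposite parity, and defc(v(λ,a,ε)) = L + |λ| - 2. -/

import Mathlib

/-- dinv contribution of an entry coming from extended negative positions. -/
def negContrib (x : ℤ) : ℕ := (if x ≤ -1 then 1 else 0) + (if x ≤ -2 then 1 else 0)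

/-- The diagonal inversion statistic of a quasi-Dyck vector, with the
convention `v_k = k - 1` for `k ≤ 0`. -/
def dinv (v : List ℤ) : ℕ :=
  (Finset.univ.filter (fun p : Fin v.length × Fin v.length =>
      (p.1 : ℕ) < (p.2 : ℕ) ∧ (v.get p.1 - v.get p.2 = 0 ∨ v.get p.1 - v.get p.2 = 1))).card
  + (v.map negContrib).sum

def area (v : List ℤ) : ℤ := v.sum

def defc (v : List ℤ) : ℤ := (v.length.choose 2 : ℤ) - area v - (dinv v : ℤ)

/-- Quasi-Dyck vector: nonempty, starts with 0, consecutive increases ≤ 1. -/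
def IsQDV (v : List ℤ) : Prop :=
  v.head? = some 0 ∧ ∀ i : ℕ, i + 1 < v.length → v.getD (i + 1) 0 ≤ v.getD i 0 + 1

def IsDyck (v : List ℤ) : Prop := IsQDV v ∧ ∀ x ∈ v, 0 ≤ x

def stepRel (v w : List ℤ) : Prop := w = 0 :: v.map (· + 1)

def dyckEquiv : List ℤ → List ℤ → Prop := Relation.EqvGen stepRel

def dyckSetoid : Setoid (List ℤ) := Relation.EqvGen.setoid stepRel

abbrev DyckClass := Quotient dyckSetoid

def cls (v : List ℤ) : DyckClass := Quotient.mk dyckSetoid v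

/-- Reduced Dyck vector: a Dyck vector that is not `0 z⁺` for a Dyck vector `z`. -/
def IsReducedDV (v : List ℤ) : Prop :=
  IsDyck v ∧ ¬ ∃ z : List ℤ, IsDyck z ∧ v = 0 :: z.map (· + 1)

/-- The leader of a QDV: the largest `d` such that `v` starts with `0,1,...,d`. -/
def leader (v : List ℤ) : ℕ :=
  Nat.findGreatest (fun d => ∀ i, i ≤ d → v.getD i 0 = (i : ℤ)) (v.length - 1)

/-- Delete the leader symbol and append `leader - 1`. -/
def nuStep (v : List ℤ) : List ℤ :=
  v.take (leader v) ++ v.drop (leader v + 1) ++ [(leader v : ℤ) - 1]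

def nuApplies (v : List ℤ) : Prop :=
  IsQDV v ∧ 2 ≤ v.length ∧ 0 ≤ v.getD 1 0 ∧ (leader v : ℤ) ≤ v.getLastD 0 + 2

/-- The map NU₁ on Dyck classes, as a relation. -/
def nuClassRel (c c' : DyckClass) : Prop :=
  ∃ v, nuApplies v ∧ c = cls v ∧ c' = cls (nuStep v)

def stepOk (A : List ℤ) : Prop := ∀ i : ℕ, i + 1 < A.length → A.getD (i + 1) 0 ≤ A.getD i 0 + 1

def okA (A : List ℤ) : Prop :=
  A = [] ∨ ((∀ x ∈ A, x ≤ 2) ∧ 0 ≤ A.getLastD 0 ∧ stepOk A)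

def okB (B : List ℤ) : Prop :=
  B = [] ∨ ((∀ x ∈ B, x ≤ 2) ∧ B.headD 0 ≤ 1 ∧ -1 ≤ B.getLastD 0 ∧ stepOk B)

/-- The map NU₂ on Dyck classes, as a relation. -/
def nu2ClassRel (c c' : DyckClass) : Prop :=
  (∃ (h : ℕ) (A : List ℤ), 2 ≤ h ∧ okA A ∧
      c = cls ([0, 1] ++ List.replicate h (2:ℤ) ++ A ++ List.replicate (h - 1) (-1)) ∧
      c' = cls (List.replicate h (0:ℤ) ++ [1] ++ A ++ List.replicate h 1)) ∨
  (∃ (k : ℕ) (B : List ℤ), 1 ≤ k ∧ okB B ∧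
      c = cls ([0, 1] ++ List.replicate k (2:ℤ) ++ B ++ List.replicate k (-1)) ∧
      c' = cls (List.replicate (k + 1) (0:ℤ) ++ B ++ [0] ++ List.replicate k 1))

/-- The extended next-up map NU = NU₁ ∪ NU₂, as a relation on Dyck classes. -/
def nuRel (c c' : DyckClass) : Prop := nuClassRel c c' ∨ nu2ClassRel c c'

/-- An integer partition, given by its weakly decreasing list of positive parts. -/
def IsPartitionList (l : List ℕ) : Prop := l.Pairwise (· ≥ ·) ∧ ∀ x ∈ l, 0 < x

/-- `phi l n` = the QDV `(0 - λ_n, 1 - λ_{n-1}, ..., (n-1) - λ_1)`. -/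
def phi (l : List ℕ) (n : ℕ) : List ℤ :=
  List.ofFn (fun i : Fin n => (i : ℤ) - (l.getD (n - 1 - (i : ℕ)) 0 : ℤ))

def nuOne (g : List ℕ) : List ℕ :=
  (g.length + 1) :: (g.map (· - 1)).filter (fun x => 0 < x)

def ndOne (g : List ℕ) : List ℕ :=
  g.tail.map (· + 1) ++ List.replicate (g.headD 0 - g.length) 1

/-- dinv of a partition: number of cells with arm - leg ∈ {0,1}. -/
def pdinv (l : List ℕ) : ℕ :=
  (Finset.univ.filter (fun c : Fin l.length × Fin (l.headD 0) =>
    (c.2 : ℕ) < l.get c.1 ∧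
      (l.get c.1 - 1 - (c.2 : ℕ) =
          (Finset.univ.filter (fun i' : Fin l.length =>
            (c.1 : ℕ) < (i' : ℕ) ∧ (c.2 : ℕ) < l.get i')).card ∨
        l.get c.1 - 1 - (c.2 : ℕ) =
          (Finset.univ.filter (fun i' : Fin l.length =>
            (c.1 : ℕ) < (i' : ℕ) ∧ (c.2 : ℕ) < l.get i')).card + 1))).card

/-- `bWord [n_1, ..., n_r]` = `0 1^{n_1} 0 1^{n_2} ⋯ 0 1^{n_r}`. -/
def bWord (ns : List ℕ) : List ℤ :=
  (ns.map (fun m => (0:ℤ) :: List.replicate m 1)).flatten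

/-- `msize [n_1, ..., n_r] = Σ i·n_i`, the size of the partition `(r^{n_r},...,1^{n_1})`. -/
def msize (ns : List ℕ) : ℕ :=
  (List.zipWith (fun m i => m * i) ns (List.range' 1 ns.length)).sum

/-- The reduced Dyck vector `0 B_μ` of the tail initiator of a partition. -/
def tiVec (l : List ℕ) : List ℤ :=
  (0:ℤ) :: ((List.range' 1 (l.headD 0)).map
    (fun i => (0:ℤ) :: List.replicate (l.count i) (1:ℤ))).flatten

/-- `c` is the second-order tail initiator of the partition `l`: obtained from
`[0 B_μ]` by iterating the extended next-down map as long as possible. -/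
def IsTI2 (l : List ℕ) (c : DyckClass) : Prop :=
  Relation.ReflTransGen (fun x y => nuRel y x) (cls (tiVec l)) c ∧ ∀ d, ¬ nuRel d c

/-- `m` is the minimum triangle height of the Dyck class `c`. -/
def mindIs (c : DyckClass) (m : ℕ) : Prop :=
  ∃ v, IsReducedDV v ∧ c = cls v ∧ v.length = m

/-- Flagpole partition: `|μ| + 8 ≤ 2 mind(TI₂(μ))`. -/
def IsFlagpole (l : List ℕ) : Prop :=
  ∃ c m, IsTI2 l c ∧ mindIs c m ∧ l.sum + 8 ≤ 2 * m

/-- The Dyck vector `v(λ,a,ε) = 0 0 1 2^{a-ε} B_λ⁺ 1^ε`. -/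
def vLam (ns : List ℕ) (a ε : ℕ) : List ℤ :=
  [0, 0, 1] ++ List.replicate (a - ε) (2:ℤ) ++ (bWord ns).map (· + 1) ++ List.replicate ε 1

set_option linter.unnecessarySeqFocus false in
set_option linter.unusedTactic false in
def px (x y : ℤ) : Bool := decide (x - y = 0 ∨ x - y = 1)

def dinvList : List ℤ → ℕ
  | [] => 0
  | x :: l => l.countP (px x) + dinvList l

lemma countP_eq_sum (p : ℤ → Bool) (l : List ℤ) :
    l.countP p = ∑ k : Fin l.length, if p (l.get k) then 1 else 0 := by
  induction l with
  | nil => simp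
  | cons x l ih =>
    rw [List.countP_cons, ih]
    simp only [List.length_cons, Fin.sum_univ_succ, List.get_eq_getElem, Fin.val_zero,
      List.getElem_cons_zero, Fin.val_succ, List.getElem_cons_succ]
    rw [Nat.add_comm]; rfl

lemma dinv_pairs_eq (v : List ℤ) :
    (Finset.univ.filter (fun p : Fin v.length × Fin v.length =>
      (p.1 : ℕ) < (p.2 : ℕ) ∧ (v.get p.1 - v.get p.2 = 0 ∨ v.get p.1 - v.get p.2 = 1))).card
    = dinvList v := by
  rw [Finset.card_filter, Fintype.sum_prod_type]
  induction v with
  | nil => simp [dinvList]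
  | cons x l ih =>
    rw [dinvList, ← ih, countP_eq_sum]
    simp only [List.length_cons, Fin.sum_univ_succ, List.get_eq_getElem, Fin.val_zero,
      Fin.val_succ, List.getElem_cons_zero, List.getElem_cons_succ, Nat.lt_irrefl,
      Nat.zero_lt_succ, Nat.succ_lt_succ_iff, Nat.not_lt_zero, false_and, if_false, true_and, px,
      decide_eq_true_eq, zero_add]

lemma dinv_eq (v : List ℤ) : dinv v = dinvList v + (v.map negContrib).sum := by
  rw [dinv, dinv_pairs_eq]

def crossSum (u w : List ℤ) : ℕ := (u.map (fun x => w.countP (px x))).sum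

lemma crossSum_nil (w : List ℤ) : crossSum [] w = 0 := rfl
lemma crossSum_cons (x : ℤ) (u w : List ℤ) :
    crossSum (x :: u) w = w.countP (px x) + crossSum u w := rfl

lemma dinvList_append (u w : List ℤ) :
    dinvList (u ++ w) = dinvList u + dinvList w + crossSum u w := by
  induction u with
  | nil => simp [dinvList, crossSum_nil]
  | cons x u ih =>
    rw [List.cons_append, dinvList, List.countP_append, ih, crossSum_cons, dinvList]
    ring

lemma countP_replicate (p : ℤ → Bool) (n : ℕ) (c : ℤ) :
    (List.replicate n c).countP p = if p c then n else 0 := by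
  induction n with
  | zero => simp
  | succ n ih =>
    rw [List.replicate_succ, List.countP_cons, ih]
    by_cases h : p c <;> simp [h]

lemma dinvList_replicate (n : ℕ) (c : ℤ) : dinvList (List.replicate n c) = n.choose 2 := by
  induction n with
  | zero => simp [dinvList]
  | succ n ih =>
    rw [List.replicate_succ, dinvList, ih, countP_replicate,
      Nat.choose_succ_succ, Nat.choose_one_right]
    have : px c c = true := by simp [px]
    rw [this, if_pos rfl]

lemma crossSum_replicate_left (n : ℕ) (c : ℤ) (w : List ℤ) :
    crossSum (List.replicate n c) w = n * w.countP (px c) := by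
  induction n with
  | zero => simp [crossSum_nil]
  | succ n ih => rw [List.replicate_succ, crossSum_cons, ih]; ring

lemma crossSum_singleton_right (u : List ℤ) (c : ℤ) :
    crossSum u [c] = u.countP (fun x => px x c) := by
  induction u with
  | nil => rfl
  | cons x u ih =>
    rw [crossSum_cons, ih, List.countP_cons]
    by_cases h : px x c <;> simp [h] <;> omega

lemma crossSum_append_right (u w₁ w₂ : List ℤ) :
    crossSum u (w₁ ++ w₂) = crossSum u w₁ + crossSum u w₂ := by
  induction u with
  | nil => rfl
  | cons x u ih => simp only [crossSum_cons, List.countP_append, ih]; ring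

lemma two_mul_choose_two (n : ℕ) : 2 * n.choose 2 + n = n * n := by
  induction n with
  | zero => rfl
  | succ n ih =>
    rw [Nat.choose_succ_succ, Nat.choose_one_right]
    nlinarith [ih]

lemma choose_two_add (x y : ℕ) : (x + y).choose 2 = x.choose 2 + y.choose 2 + x * y := by
  induction y with
  | zero => simp
  | succ y ih =>
    have h1 : x + (y+1) = (x+y) + 1 := by ring
    rw [h1, Nat.choose_succ_succ, Nat.choose_one_right, ih,
      Nat.choose_succ_succ (y), Nat.choose_one_right, Nat.mul_succ]
    ring



lemma px_shift (x y : ℤ) : px (x+1) (y+1) = px x y := by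
  simp only [px]; rw [decide_eq_decide]; omega

lemma bWord_cons (m : ℕ) (t : List ℕ) :
    bWord (m :: t) = ((0:ℤ) :: List.replicate m 1) ++ bWord t := by
  simp [bWord]

lemma length_bWord (ns : List ℕ) : (bWord ns).length = ns.length + ns.sum := by
  induction ns with
  | nil => rfl
  | cons m t ih => simp only [bWord_cons, List.length_append, List.length_cons,
      List.length_replicate, ih, List.sum_cons]; omega

lemma sum_bWord (ns : List ℕ) : (bWord ns).sum = (ns.sum : ℤ) := by
  induction ns with
  | nil => rfl
  | cons m t ih => simp only [bWord_cons, List.sum_append, List.sum_cons,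
      List.sum_replicate, ih]; push_cast; simp [nsmul_eq_mul]

lemma mem_bWord (ns : List ℕ) : ∀ x ∈ bWord ns, x = 0 ∨ x = 1 := by
  induction ns with
  | nil => simp [bWord]
  | cons m t ih =>
    intro x hx
    rw [bWord_cons, List.mem_append, List.mem_cons] at hx
    rcases hx with (h | h) | h
    · left; exact h
    · right; exact List.eq_of_mem_replicate h
    · exact ih x h

lemma countP_block (p : ℤ → Bool) (m : ℕ) :
    ((0:ℤ) :: List.replicate m 1).countP p
      = (if p 0 then 1 else 0) + (if p 1 then m else 0) := by
  rw [List.countP_cons, countP_replicate]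
  omega

lemma countP_px0_bWord (ns : List ℕ) : (bWord ns).countP (px 0) = ns.length := by
  induction ns with
  | nil => rfl
  | cons m t ih =>
    rw [bWord_cons, List.countP_append, countP_block, ih]
    norm_num [px]
    omega

lemma countP_px1_bWord (ns : List ℕ) : (bWord ns).countP (px 1) = ns.length + ns.sum := by
  induction ns with
  | nil => rfl
  | cons m t ih =>
    rw [bWord_cons, List.countP_append, countP_block, ih]
    norm_num [px]
    omega

lemma countP_px0s_bWord (ns : List ℕ) :
    (bWord ns).countP (fun y => px 0 (y+1)) = 0 := by
  rw [List.countP_eq_zero]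
  intro y hy
  rcases mem_bWord ns y hy with h | h <;> subst h <;> norm_num [px]

lemma countP_pxs1_bWord (ns : List ℕ) :
    (bWord ns).countP (fun y => px (y+1) 1) = ns.length + ns.sum := by
  rw [← length_bWord, List.countP_eq_length]
  intro y hy
  rcases mem_bWord ns y hy with h | h <;> subst h <;> norm_num [px]

lemma dinvList_map_add_one (l : List ℤ) : dinvList (l.map (· + 1)) = dinvList l := by
  induction l with
  | nil => rfl
  | cons x l ih =>
    rw [List.map_cons, dinvList, dinvList, ih, List.countP_map]
    congr 1
    apply List.countP_congr
    intro y _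
    simp [Function.comp, px_shift x y]

lemma msize_shift (t : List ℕ) (k : ℕ) :
    (List.zipWith (fun m i => m * i) t (List.range' (k+1) t.length)).sum
      = (List.zipWith (fun m i => m * i) t (List.range' k t.length)).sum + t.sum := by
  induction t generalizing k with
  | nil => rfl
  | cons m t ih =>
    simp only [List.length_cons, List.range'_succ, List.zipWith_cons_cons, List.sum_cons,
      List.sum_cons, ih (k+1), ih k]
    ring_nf

lemma msize_cons (m : ℕ) (t : List ℕ) : msize (m :: t) = m + t.sum + msize t := by
  simp only [msize, List.length_cons, List.range'_succ, List.zipWith_cons_cons, List.sum_cons]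
  rw [msize_shift]
  omega

lemma dinvList_bWord (ns : List ℕ) :
    dinvList (bWord ns) + msize ns = (ns.length + ns.sum).choose 2 := by
  induction ns with
  | nil => rfl
  | cons m t ih =>
    rw [bWord_cons, dinvList_append, msize_cons]
    have h1 : dinvList ((0:ℤ) :: List.replicate m 1) = m.choose 2 := by
      rw [dinvList, dinvList_replicate, countP_replicate]
      norm_num [px]
    have h2 : crossSum ((0:ℤ) :: List.replicate m 1) (bWord t)
        = t.length + m * (t.length + t.sum) := by
      rw [crossSum_cons, crossSum_replicate_left, countP_px0_bWord, countP_px1_bWord]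
    rw [h1, h2]
    have h3 : (m :: t).length + (m :: t).sum = (t.length + t.sum) + (m + 1) := by
      simp [List.sum_cons]; omega
    rw [h3, choose_two_add, ← ih, Nat.choose_succ_succ, Nat.choose_one_right]
    show m.choose 2 + dinvList (bWord t) + (t.length + m * (t.length + t.sum)) + (m + t.sum + msize t) =
      dinvList (bWord t) + msize t + (m + m.choose 2) + (t.length + t.sum) * (m + 1)
    have h4 : (t.length + t.sum) * (m + 1) = m * (t.length + t.sum) + t.length + t.sum := by
      ring
    omega


lemma sum_map_add_one (l : List ℤ) : (l.map (· + 1)).sum = l.sum + l.length := by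
  induction l with
  | nil => rfl
  | cons x l ih => simp only [List.map_cons, List.sum_cons, ih, List.length_cons]; push_cast; ring

lemma countP_w0 (ns : List ℕ) : ((bWord ns).map (· + 1)).countP (px 0) = 0 := by
  rw [List.countP_map]
  have h : (bWord ns).countP (px 0 ∘ (· + 1)) = (bWord ns).countP (fun y => px 0 (y+1)) := by
    apply List.countP_congr; intro y _; simp [Function.comp]
  rw [h, countP_px0s_bWord]

lemma countP_w1 (ns : List ℕ) : ((bWord ns).map (· + 1)).countP (px 1) = ns.length := by
  rw [List.countP_map]
  have h : (bWord ns).countP (px 1 ∘ (· + 1)) = (bWord ns).countP (px 0) := by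
    apply List.countP_congr; intro y _
    have := px_shift 0 y
    norm_num at this ⊢
    simp [Function.comp, this]
  rw [h, countP_px0_bWord]

lemma countP_w2 (ns : List ℕ) :
    ((bWord ns).map (· + 1)).countP (px 2) = ns.length + ns.sum := by
  rw [List.countP_map]
  have h : (bWord ns).countP (px 2 ∘ (· + 1)) = (bWord ns).countP (px 1) := by
    apply List.countP_congr; intro y _
    have := px_shift 1 y
    norm_num at this ⊢
    simp [Function.comp, this]
  rw [h, countP_px1_bWord]

lemma countP_wto1 (ns : List ℕ) :
    ((bWord ns).map (· + 1)).countP (fun x => px x 1) = ns.length + ns.sum := by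
  rw [List.countP_map]
  have h : (bWord ns).countP ((fun x => px x 1) ∘ (· + 1))
      = (bWord ns).countP (fun y => px (y+1) 1) := by
    apply List.countP_congr; intro y _; simp [Function.comp]
  rw [h, countP_pxs1_bWord]

lemma negsum_zero (v : List ℤ) (h : ∀ x ∈ v, 0 ≤ x) : (v.map negContrib).sum = 0 := by
  induction v with
  | nil => rfl
  | cons x l ih =>
    have hx := h x (by simp)
    have : negContrib x = 0 := by simp [negContrib]; omega
    simp only [List.map_cons, List.sum_cons, this, Nat.zero_add]
    exact ih (fun y hy => h y (by simp [hy]))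

lemma vLam_nonneg (ns : List ℕ) (a ε : ℕ) : ∀ x ∈ vLam ns a ε, 0 ≤ x := by
  intro x hx
  simp only [vLam, List.mem_append, List.mem_cons, List.mem_replicate, List.mem_map] at hx
  rcases hx with (((rfl | rfl | rfl | h) | ⟨-, rfl⟩) | ⟨y, hy, rfl⟩) | ⟨-, rfl⟩
  · omega
  · omega
  · omega
  · simp at h
  · omega
  · rcases mem_bWord ns y hy with h | h <;> omega
  · omega

lemma dinvList_concrete : dinvList [0,0,1] = 1 ∧ dinvList ([] : List ℤ) = 0 := by
  constructor
  · simp [dinvList, List.countP_cons, px]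
  · rfl

lemma dinvList_vLam (ns : List ℕ) (a ε : ℕ) (ha : 2 ≤ a) (hε : ε ≤ 1) :
    dinvList (vLam ns a ε) + msize ns + 3 * (a + 3 + ns.length + ns.sum)
      = (a + 3 + ns.length + ns.sum).choose 2 + ns.length + 7 + ε := by
  obtain ⟨b, rfl⟩ : ∃ b, a = b + 2 := ⟨a - 2, by omega⟩
  have key := dinvList_bWord ns
  have e1 : (b+2+3+ns.length+ns.sum).choose 2
      = (b+2).choose 2 + (3+(ns.length+ns.sum)).choose 2 + (b+2)*(3+(ns.length+ns.sum)) := by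
    rw [show b+2+3+ns.length+ns.sum = (b+2) + (3+(ns.length+ns.sum)) by ring, choose_two_add]
  have e2 : (3+(ns.length+ns.sum)).choose 2
      = 3 + (ns.length+ns.sum).choose 2 + 3*(ns.length+ns.sum) := by
    rw [choose_two_add]
    norm_num [Nat.choose]
  interval_cases ε
  · have hv : vLam ns (b+2) 0
        = [0,0,1] ++ (List.replicate (b+2) (2:ℤ) ++ (bWord ns).map (· + 1)) := by
      simp [vLam]
    have hc : crossSum [0,0,1] (List.replicate (b+2) (2:ℤ) ++ (bWord ns).map (· + 1))
        = ns.length := by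
      rw [crossSum_cons, crossSum_cons, crossSum_cons, crossSum_nil]
      simp only [List.countP_append, countP_replicate, countP_w0, countP_w1]
      norm_num [px]
    rw [hv, dinvList_append, dinvList_append, dinvList_replicate, dinvList_map_add_one,
      crossSum_replicate_left, countP_w2, hc, dinvList_concrete.1]
    linarith [key, e1, e2]
  · have hv : vLam ns (b+2) 1
        = [0,0,1] ++ (List.replicate (b+1) (2:ℤ) ++ ((bWord ns).map (· + 1) ++ [1])) := by
      simp [vLam, List.replicate_succ]
    have hc : crossSum [0,0,1] (List.replicate (b+1) (2:ℤ) ++ ((bWord ns).map (· + 1) ++ [1]))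
        = ns.length + 1 := by
      rw [crossSum_cons, crossSum_cons, crossSum_cons, crossSum_nil]
      simp only [List.countP_append, countP_replicate, countP_w0, countP_w1]
      norm_num [px, List.countP_cons]
    have hcnt : ((bWord ns).map (· + 1) ++ [1]).countP (px 2) = ns.length + ns.sum + 1 := by
      rw [List.countP_append, countP_w2]
      norm_num [px, List.countP_cons]
    rw [hv, dinvList_append, dinvList_append, dinvList_append, dinvList_replicate,
      dinvList_map_add_one, crossSum_replicate_left, hcnt, crossSum_singleton_right,
      countP_wto1, hc, dinvList_concrete.1]
    have h1 : dinvList [1] = 0 := rfl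
    rw [h1]
    have e3 : (b+2)*(3+(ns.length+ns.sum))
        = (b+1)*(ns.length+ns.sum+1) + 2*b + 5 + (ns.length+ns.sum) := by ring
    have e4 : (b+2).choose 2 = (b+1).choose 2 + (b+1) := by
      have h5 := choose_two_add (b+1) 1
      norm_num at h5
      linarith [h5]
    linarith [key, e1, e2, e3, e4]

lemma length_vLam (ns : List ℕ) (a ε : ℕ) (ha : 2 ≤ a) (hε : ε ≤ 1) :
    (vLam ns a ε).length = a + 3 + ns.length + ns.sum := by
  simp [vLam, length_bWord]
  omega

lemma area_vLam (ns : List ℕ) (a ε : ℕ) (ha : 2 ≤ a) (hε : ε ≤ 1) :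
    (vLam ns a ε).sum
      = 2 * ((a + 3 + ns.length + ns.sum : ℕ) : ℤ) - (ns.length : ℤ) - 5 - (ε : ℤ) := by
  simp [vLam, sum_map_add_one, sum_bWord, length_bWord]
  push_cast
  have : ((a - ε : ℕ) : ℤ) = (a : ℤ) - ε := by omega
  rw [this]
  ring

lemma dinv_vLam (ns : List ℕ) (a ε : ℕ) (ha : 2 ≤ a) (hε : ε ≤ 1) :
    dinv (vLam ns a ε) + msize ns + 3 * (a + 3 + ns.length + ns.sum)
      = (a + 3 + ns.length + ns.sum).choose 2 + ns.length + 7 + ε := by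
  rw [dinv_eq, negsum_zero _ (vLam_nonneg ns a ε), Nat.add_zero]
  exact dinvList_vLam ns a ε ha hε

theorem stmt19 (ns : List ℕ) (hns : ns = [] ∨ 0 < ns.getLastD 0) (a ε : ℕ)
    (ha : 2 ≤ a) (hε : ε ≤ 1) :
    (vLam ns a ε).length = a + 3 + ns.length + ns.sum ∧
    area (vLam ns a ε)
      = 2 * ((a + 3 + ns.length + ns.sum : ℕ) : ℤ) - (ns.length : ℤ) - 5 - (ε : ℤ) ∧
    (dinv (vLam ns a ε) : ℤ)
      = ((a + 3 + ns.length + ns.sum).choose 2 : ℤ)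
        - 3 * ((a + 3 + ns.length + ns.sum : ℕ) : ℤ) - (msize ns : ℤ)
        + (ns.length : ℤ) + 7 + (ε : ℤ) ∧
    dinv (vLam ns a 1) = dinv (vLam ns a 0) + 1 ∧
    defc (vLam ns a ε) = ((a + 3 + ns.length + ns.sum : ℕ) : ℤ) + (msize ns : ℤ) - 2 := by
  have hd := dinv_vLam ns a ε ha hε
  have hl := length_vLam ns a ε ha hε
  have hA := area_vLam ns a ε ha hε
  refine ⟨hl, hA, by omega, ?_, ?_⟩
  · have h0 := dinv_vLam ns a 0 ha (by norm_num)
    have h1 := dinv_vLam ns a 1 ha le_rfl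
    omega
  · rw [defc, area, hl, hA]
    omega
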